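/- Fix y, s ∈ {0,1} and a ∈ 𝒜 with P(Y⁰=y, S=s) > 0, and assume: consistency (P-almost surely, if D = 0 then Y = Y⁰); Y⁰ is conditionally independent of (A, D) given (X, S), i.e. for all y', d ∈ {0,1}, a' ∈ 𝒜, and all x, s' with P(X=x, S=s') > 0, P(Y⁰=y', A=a', D=d | X=x, S=s') = P(Y⁰=y' | X=x, S=s') · P(A=a', D=d | X=x, S=s'); and positivity given (X,S), i.e. P(D=0, S=s', X=x) > 0 whenever P(S=s', X=x) > 0. Then the conditional group-membership probability is identified by observed-data regressions: P(A=a | Y⁰=y, S=s) = E[μ₀(y,s,X) · 1{A=a} · 1{S=s}] / E[μ₀(y,s,X) · 1{S=s}], where the denominator is strictly positive since it equals P(Y⁰=y, S=s). -/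

import Mathlib

open MeasureTheory

/-- `pr P E` is the probability of the event `E` as a real number. -/
noncomputable def pr {Ω : Type*} [MeasurableSpace Ω] (P : Measure Ω) (E : Set Ω) : ℝ :=
  (P E).toReal

/-- `cpr P E F = P(E | F) = P(E ∩ F) / P(F)`, the conditional probability of `E` given `F`. -/
noncomputable def cpr {Ω : Type*} [MeasurableSpace Ω] (P : Measure Ω) (E F : Set Ω) : ℝ :=
  pr P (E ∩ F) / pr P F

section aux
variable {Ω : Type*} [MeasurableSpace Ω] (P : Measure Ω) [IsProbabilityMeasure P]

omit [IsProbabilityMeasure P] in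
lemma pr_nonneg (E : Set Ω) : 0 ≤ pr P E := ENNReal.toReal_nonneg

lemma pr_mono {E F : Set Ω} (h : E ⊆ F) : pr P E ≤ pr P F :=
  ENNReal.toReal_mono (measure_ne_top _ _) (measure_mono h)

lemma pr_union {E F : Set Ω} (hF : MeasurableSet F) (h : Disjoint E F) :
    pr P (E ∪ F) = pr P E + pr P F := by
  unfold pr
  rw [measure_union h hF, ENNReal.toReal_add (measure_ne_top _ _) (measure_ne_top _ _)]

lemma pr_tsum {ι : Type*} [Countable ι] (f : ι → Set Ω)
    (hm : ∀ i, MeasurableSet (f i)) (hd : Pairwise (Function.onFun Disjoint f)) :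
    ∑' i, pr P (f i) = pr P (⋃ i, f i) := by
  unfold pr
  rw [measure_iUnion hd hm, ENNReal.tsum_toReal_eq (fun i => measure_ne_top _ _)]

omit [IsProbabilityMeasure P] in
lemma cpr_mul_pr {E F : Set Ω} (h : pr P F ≠ 0) : cpr P E F * pr P F = pr P (E ∩ F) :=
  div_mul_cancel₀ _ h

end aux

/-- under consistency, conditional independence of `Y⁰` and `(A, D)` given `(X, S)`,
and positivity given `(X, S)`, the conditional group-membership probability is identified:
`P(A=a | Y⁰=y, S=s) = E[μ₀(y,s,X)·1{A=a}·1{S=s}] / E[μ₀(y,s,X)·1{S=s}]`,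
where `μ₀(y,s,x) = P(Y=y | D=0, S=s, X=x)` and the denominator is strictly positive since it
equals `P(Y⁰=y, S=s)`.
Binary variables are modelled as `Bool`-valued, with `1 = true` and `0 = false`. -/
theorem stmt_7
    {Ω 𝒜 𝒳 : Type*} [MeasurableSpace Ω]
    [MeasurableSpace 𝒜] [MeasurableSingletonClass 𝒜] [Countable 𝒜] [Nonempty 𝒜]
    [MeasurableSpace 𝒳] [MeasurableSingletonClass 𝒳] [Countable 𝒳] [Nonempty 𝒳]
    (P : Measure Ω) [IsProbabilityMeasure P]
    (Y0 Y D S : Ω → Bool) (A : Ω → 𝒜) (X : Ω → 𝒳)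
    (hY0 : Measurable Y0) (hY : Measurable Y) (hD : Measurable D) (hS : Measurable S)
    (hA : Measurable A) (hX : Measurable X)
    (y s : Bool) (a : 𝒜)
    (hpos : 0 < pr P {ω | Y0 ω = y ∧ S ω = s})
    (hcons : ∀ᵐ ω ∂P, D ω = false → Y ω = Y0 ω)
    (hCI : ∀ (y' d : Bool) (a' : 𝒜) (x : 𝒳) (s' : Bool),
      0 < pr P {ω | X ω = x ∧ S ω = s'} →
      cpr P {ω | Y0 ω = y' ∧ A ω = a' ∧ D ω = d} {ω | X ω = x ∧ S ω = s'} =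
        cpr P {ω | Y0 ω = y'} {ω | X ω = x ∧ S ω = s'} *
          cpr P {ω | A ω = a' ∧ D ω = d} {ω | X ω = x ∧ S ω = s'})
    (hposD : ∀ (s' : Bool) (x : 𝒳), 0 < pr P {ω | S ω = s' ∧ X ω = x} →
      0 < pr P {ω | D ω = false ∧ S ω = s' ∧ X ω = x}) :
    0 < (∑' x : 𝒳,
          cpr P {ω | Y ω = y} {ω | D ω = false ∧ S ω = s ∧ X ω = x} *
            pr P {ω | S ω = s ∧ X ω = x}) ∧
    (∑' x : 𝒳,
        cpr P {ω | Y ω = y} {ω | D ω = false ∧ S ω = s ∧ X ω = x} *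
          pr P {ω | S ω = s ∧ X ω = x}) = pr P {ω | Y0 ω = y ∧ S ω = s} ∧
    cpr P {ω | A ω = a} {ω | Y0 ω = y ∧ S ω = s} =
      (∑' x : 𝒳,
          cpr P {ω | Y ω = y} {ω | D ω = false ∧ S ω = s ∧ X ω = x} *
            pr P {ω | A ω = a ∧ S ω = s ∧ X ω = x}) /
        (∑' x : 𝒳,
            cpr P {ω | Y ω = y} {ω | D ω = false ∧ S ω = s ∧ X ω = x} *
              pr P {ω | S ω = s ∧ X ω = x}) := by
  classical
  have mF : ∀ x : 𝒳, MeasurableSet {ω | X ω = x ∧ S ω = s} := fun x =>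
    (hX (measurableSet_singleton x)).inter (hS (measurableSet_singleton s))
  set F : 𝒳 → Set Ω := fun x => {ω | X ω = x ∧ S ω = s} with hFdef
  set g : 𝒳 → ℝ :=
    fun x => cpr P {ω | Y ω = y} {ω | D ω = false ∧ S ω = s ∧ X ω = x} with hgdef
  have mY0 : MeasurableSet {ω | Y0 ω = y} := hY0 (measurableSet_singleton y)
  have mA : ∀ a' : 𝒜, MeasurableSet {ω | A ω = a'} := fun a' =>
    hA (measurableSet_singleton a')
  have mD : ∀ d : Bool, MeasurableSet {ω | D ω = d} := fun d =>
    hD (measurableSet_singleton d)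
  -- key pointwise identities
  have key : ∀ x : 𝒳,
      g x * pr P {ω | S ω = s ∧ X ω = x} = pr P ({ω | Y0 ω = y} ∩ F x) ∧
      g x * pr P {ω | A ω = a ∧ S ω = s ∧ X ω = x} =
        pr P ({ω | Y0 ω = y ∧ A ω = a} ∩ F x) := by
    intro x
    have hSX : {ω | S ω = s ∧ X ω = x} = F x := by
      ext ω; exact and_comm
    have hASX : {ω | A ω = a ∧ S ω = s ∧ X ω = x} = {ω | A ω = a} ∩ F x := by
      ext ω
      simp only [Set.mem_inter_iff, Set.mem_setOf_eq, hFdef]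
      tauto
    by_cases hq : 0 < pr P (F x)
    · have hqne : pr P (F x) ≠ 0 := ne_of_gt hq
      have hG : {ω | D ω = false ∧ S ω = s ∧ X ω = x} = {ω | D ω = false} ∩ F x := by
        ext ω
        simp only [Set.mem_inter_iff, Set.mem_setOf_eq, hFdef]
        tauto
      have hr : 0 < pr P ({ω | D ω = false} ∩ F x) := by
        rw [← hG]; exact hposD s x (by rw [hSX]; exact hq)
      -- Y0 ⟂ D given F x
      have hsum1 : ∑' a' : 𝒜, pr P ({ω | Y0 ω = y ∧ A ω = a' ∧ D ω = false} ∩ F x)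
          = pr P ({ω | Y0 ω = y ∧ D ω = false} ∩ F x) := by
        rw [pr_tsum P (fun a' => {ω | Y0 ω = y ∧ A ω = a' ∧ D ω = false} ∩ F x)
          (fun a' => (mY0.inter ((mA a').inter (mD false))).inter (mF x)) ?_]
        · congr 1
          ext ω
          simp only [Set.mem_iUnion, Set.mem_inter_iff, Set.mem_setOf_eq]
          constructor
          · rintro ⟨a', ⟨h1, _, h3⟩, h4⟩; exact ⟨⟨h1, h3⟩, h4⟩
          · rintro ⟨⟨h1, h3⟩, h4⟩; exact ⟨A ω, ⟨h1, rfl, h3⟩, h4⟩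
        · intro i j hij
          simp only [Function.onFun, Set.disjoint_left]
          rintro ω ⟨⟨_, h2, _⟩, _⟩ ⟨⟨_, h5, _⟩, _⟩
          exact hij (h2.symm.trans h5)
      have hsum2 : ∑' a' : 𝒜, pr P ({ω | A ω = a' ∧ D ω = false} ∩ F x)
          = pr P ({ω | D ω = false} ∩ F x) := by
        rw [pr_tsum P (fun a' => {ω | A ω = a' ∧ D ω = false} ∩ F x)
          (fun a' => ((mA a').inter (mD false)).inter (mF x)) ?_]
        · congr 1
          ext ω
          simp only [Set.mem_iUnion, Set.mem_inter_iff, Set.mem_setOf_eq]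
          constructor
          · rintro ⟨a', ⟨_, h3⟩, h4⟩; exact ⟨h3, h4⟩
          · rintro ⟨h3, h4⟩; exact ⟨A ω, ⟨rfl, h3⟩, h4⟩
        · intro i j hij
          simp only [Function.onFun, Set.disjoint_left]
          rintro ω ⟨⟨h2, _⟩, _⟩ ⟨⟨h5, _⟩, _⟩
          exact hij (h2.symm.trans h5)
      have hCId : cpr P {ω | Y0 ω = y ∧ D ω = false} (F x)
          = cpr P {ω | Y0 ω = y} (F x) * cpr P {ω | D ω = false} (F x) := by
        have hL : ∑' a' : 𝒜, cpr P {ω | Y0 ω = y ∧ A ω = a' ∧ D ω = false} (F x)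
            = cpr P {ω | Y0 ω = y ∧ D ω = false} (F x) := by
          simp only [cpr, div_eq_mul_inv]
          rw [tsum_mul_right, hsum1]
        have hR : ∑' a' : 𝒜, cpr P {ω | Y0 ω = y} (F x) *
              cpr P {ω | A ω = a' ∧ D ω = false} (F x)
            = cpr P {ω | Y0 ω = y} (F x) * cpr P {ω | D ω = false} (F x) := by
          simp only [cpr, div_eq_mul_inv]
          rw [tsum_mul_left, tsum_mul_right, hsum2]
        rw [← hL, ← hR]
        exact tsum_congr (fun a' => hCI y false a' x s hq)
      -- Y0 ⟂ A given F x
      have hCIa : cpr P {ω | Y0 ω = y ∧ A ω = a} (F x)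
          = cpr P {ω | Y0 ω = y} (F x) * cpr P {ω | A ω = a} (F x) := by
        have hA1 : pr P ({ω | Y0 ω = y ∧ A ω = a ∧ D ω = true} ∩ F x) +
            pr P ({ω | Y0 ω = y ∧ A ω = a ∧ D ω = false} ∩ F x)
            = pr P ({ω | Y0 ω = y ∧ A ω = a} ∩ F x) := by
          rw [← pr_union P (E := {ω | Y0 ω = y ∧ A ω = a ∧ D ω = true} ∩ F x)
            (F := {ω | Y0 ω = y ∧ A ω = a ∧ D ω = false} ∩ F x)
            ((mY0.inter ((mA a).inter (mD false))).inter (mF x)) ?_]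
          · congr 1
            ext ω
            simp only [Set.mem_union, Set.mem_inter_iff, Set.mem_setOf_eq]
            constructor
            · rintro (⟨⟨h1, h2, _⟩, h4⟩ | ⟨⟨h1, h2, _⟩, h4⟩) <;> exact ⟨⟨h1, h2⟩, h4⟩
            · rintro ⟨⟨h1, h2⟩, h4⟩
              cases hd : D ω
              · exact Or.inr ⟨⟨h1, h2, rfl⟩, h4⟩
              · exact Or.inl ⟨⟨h1, h2, rfl⟩, h4⟩
          · simp only [Set.disjoint_left]
            rintro ω ⟨⟨_, _, h3⟩, _⟩ ⟨⟨_, _, h6⟩, _⟩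
            simp [h3] at h6
        have hA2 : pr P ({ω | A ω = a ∧ D ω = true} ∩ F x) +
            pr P ({ω | A ω = a ∧ D ω = false} ∩ F x)
            = pr P ({ω | A ω = a} ∩ F x) := by
          rw [← pr_union P (E := {ω | A ω = a ∧ D ω = true} ∩ F x)
            (F := {ω | A ω = a ∧ D ω = false} ∩ F x)
            (((mA a).inter (mD false)).inter (mF x)) ?_]
          · congr 1
            ext ω
            simp only [Set.mem_union, Set.mem_inter_iff, Set.mem_setOf_eq]
            constructor
            · rintro (⟨⟨h2, _⟩, h4⟩ | ⟨⟨h2, _⟩, h4⟩) <;> exact ⟨h2, h4⟩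
            · rintro ⟨h2, h4⟩
              cases hd : D ω
              · exact Or.inr ⟨⟨h2, rfl⟩, h4⟩
              · exact Or.inl ⟨⟨h2, rfl⟩, h4⟩
          · simp only [Set.disjoint_left]
            rintro ω ⟨⟨_, h3⟩, _⟩ ⟨⟨_, h6⟩, _⟩
            simp [h3] at h6
        have e1 : cpr P {ω | Y0 ω = y ∧ A ω = a ∧ D ω = true} (F x) +
            cpr P {ω | Y0 ω = y ∧ A ω = a ∧ D ω = false} (F x)
            = cpr P {ω | Y0 ω = y ∧ A ω = a} (F x) := by
          simp only [cpr]
          rw [← add_div, hA1]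
        have e2 : cpr P {ω | A ω = a ∧ D ω = true} (F x) +
            cpr P {ω | A ω = a ∧ D ω = false} (F x)
            = cpr P {ω | A ω = a} (F x) := by
          simp only [cpr]
          rw [← add_div, hA2]
        rw [← e1, hCI y true a x s hq, hCI y false a x s hq, ← mul_add, e2]
      -- consistency
      have hcons' : pr P ({ω | Y ω = y} ∩ ({ω | D ω = false} ∩ F x))
          = pr P ({ω | Y0 ω = y} ∩ ({ω | D ω = false} ∩ F x)) := by
        unfold pr
        congr 1
        apply measure_congr
        rw [Filter.eventuallyEq_set]
        filter_upwards [hcons] with ω h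
        simp only [Set.mem_inter_iff, Set.mem_setOf_eq]
        constructor
        · rintro ⟨h1, h2, h4⟩; exact ⟨(h h2).symm.trans h1, h2, h4⟩
        · rintro ⟨h1, h2, h4⟩; exact ⟨(h h2).trans h1, h2, h4⟩
      have hc : pr P ({ω | Y0 ω = y} ∩ ({ω | D ω = false} ∩ F x))
          = cpr P {ω | Y0 ω = y} (F x) * pr P ({ω | D ω = false} ∩ F x) := by
        have e1 : {ω | Y0 ω = y} ∩ ({ω | D ω = false} ∩ F x)
            = {ω | Y0 ω = y ∧ D ω = false} ∩ F x := by
          ext ω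
          simp only [Set.mem_inter_iff, Set.mem_setOf_eq]
          tauto
        rw [e1, ← cpr_mul_pr P hqne, hCId, mul_assoc, cpr_mul_pr P hqne]
      have hg : g x = cpr P {ω | Y0 ω = y} (F x) := by
        show cpr P {ω | Y ω = y} {ω | D ω = false ∧ S ω = s ∧ X ω = x} = _
        unfold cpr
        rw [hG, hcons', hc, mul_div_assoc, div_self (ne_of_gt hr), mul_one]
        rfl
      constructor
      · rw [hg, hSX, cpr_mul_pr P hqne]
      · rw [hg, hASX, ← cpr_mul_pr P (E := {ω | A ω = a}) hqne, ← mul_assoc, ← hCIa,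
          cpr_mul_pr P hqne]
    · have hq0 : pr P (F x) = 0 := le_antisymm (not_lt.1 hq) (pr_nonneg P _)
      have z : ∀ E : Set Ω, E ⊆ F x → pr P E = 0 := fun E hE =>
        le_antisymm (hq0 ▸ pr_mono P hE) (pr_nonneg P _)
      constructor
      · rw [hSX, hq0, mul_zero, z _ Set.inter_subset_right]
      · rw [hASX, z _ Set.inter_subset_right, mul_zero,
          z _ Set.inter_subset_right]
  -- sum the pointwise identities
  have disj1 : ∀ (E : Set Ω), Pairwise (Function.onFun Disjoint (fun x => E ∩ F x)) := by
    intro E i j hij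
    simp only [Function.onFun, Set.disjoint_left]
    rintro ω ⟨_, h2, _⟩ ⟨_, h5, _⟩
    exact hij (h2.symm.trans h5)
  have ksum1 : ∑' x : 𝒳, g x * pr P {ω | S ω = s ∧ X ω = x}
      = pr P {ω | Y0 ω = y ∧ S ω = s} := by
    rw [tsum_congr (fun x => (key x).1),
      pr_tsum P (fun x => {ω | Y0 ω = y} ∩ F x) (fun x => mY0.inter (mF x)) (disj1 _)]
    congr 1
    ext ω
    simp only [Set.mem_iUnion, Set.mem_inter_iff, Set.mem_setOf_eq]
    constructor
    · rintro ⟨x, h1, _, h3⟩; exact ⟨h1, h3⟩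
    · rintro ⟨h1, h3⟩; exact ⟨X ω, h1, rfl, h3⟩
  have mY0A : MeasurableSet {ω | Y0 ω = y ∧ A ω = a} := mY0.inter (mA a)
  have ksum2 : ∑' x : 𝒳, g x * pr P {ω | A ω = a ∧ S ω = s ∧ X ω = x}
      = pr P ({ω | A ω = a} ∩ {ω | Y0 ω = y ∧ S ω = s}) := by
    rw [tsum_congr (fun x => (key x).2),
      pr_tsum P (fun x => {ω | Y0 ω = y ∧ A ω = a} ∩ F x)
        (fun x => mY0A.inter (mF x)) (disj1 _)]
    congr 1
    ext ω
    simp only [Set.mem_iUnion, Set.mem_inter_iff, Set.mem_setOf_eq]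
    constructor
    · rintro ⟨x, ⟨h1, h2⟩, _, h3⟩; exact ⟨h2, h1, h3⟩
    · rintro ⟨h2, h1, h3⟩; exact ⟨X ω, ⟨h1, h2⟩, rfl, h3⟩
  refine ⟨?_, ksum1, ?_⟩
  · rw [ksum1]; exact hpos
  · rw [ksum1, ksum2]
    rfl
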